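/- Let n ≥ 1, l ∈ ℤ, ω = exp(2πi/(n+1)) ∈ ℂ and ζ = exp(πi/(n+1)) (so ζ² = ω). Let T be the diagonal (n+1)×(n+1) complex matrix with T_{jj} = ζ^{2j+1−l} (= ω^{j+(1−l)/2}) for 0 ≤ j ≤ n, let J_l be the (n+1)×(n+1) matrix with (J_l)_{ij} = 1 if i + j ≡ l − 1 (mod n+1) and 0 otherwise, and let C be the cyclic shift matrix with C_{jk} = 1 if j ≡ k + 1 (mod n+1) and 0 otherwise. Then: (i) Tᵀ * J_l * T = J_l, and (ii) T * C = ω • (C * T). Moreover, |T_{jj}| = 1 for every j, so for any real diagonal matrix G one has conj(T)ᵀ * G * T = G. -/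

import Mathlib

open Matrix
open scoped Fin.IntCast

private lemma fin_eq_to_dvd {n : ℕ} {x : Fin (n+1)} {m : ℤ}
    (h : x = ((m : ℤ) : Fin (n+1))) : ((n:ℤ)+1) ∣ ((x:ℤ) - m) := by
  have h' : (x : ZMod (n+1)) = ((m : ℤ) : ZMod (n+1)) := h
  have hx : ((x.val : ℕ) : ZMod (n+1)) = (x : ZMod (n+1)) := Fin.cast_val_eq_self x
  have h2 : ((((x:ℤ) - m : ℤ)) : ZMod (n+1)) = 0 := by
    push_cast
    rw [hx, h']
    push_cast
    ring
  have h3 := (ZMod.intCast_zmod_eq_zero_iff_dvd _ _).1 h2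
  exact_mod_cast h3

private lemma fin_add_dvd {n : ℕ} {i j : Fin (n+1)} {m : ℤ}
    (h : i + j = ((m : ℤ) : Fin (n+1))) : ((n:ℤ)+1) ∣ ((i:ℤ) + (j:ℤ) - m) := by
  have h0 := fin_eq_to_dvd h
  have hv : (((i+j : Fin (n+1)) : ℤ)) = ((i.val + j.val) % (n+1) : ℕ) := by
    norm_cast
  have hd : ((n:ℤ)+1) ∣ ((i:ℤ) + (j:ℤ) - ((i+j : Fin (n+1)) : ℤ)) := by
    rw [hv]
    have := Nat.mod_add_div (i.val + j.val) (n+1)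
    refine ⟨((i.val + j.val) / (n+1) : ℕ), ?_⟩
    push_cast
    push_cast at this
    linarith
  have := dvd_add hd h0
  simpa using this

private lemma fin_succ_dvd {n : ℕ} {j k : Fin (n+1)}
    (h : j = k + 1) : ((n:ℤ)+1) ∣ ((j:ℤ) - (k:ℤ) - 1) := by
  have h' : (j : ZMod (n+1)) = (k : ZMod (n+1)) + 1 := h
  have hj : ((j.val : ℕ) : ZMod (n+1)) = (j : ZMod (n+1)) := Fin.cast_val_eq_self j
  have hk : ((k.val : ℕ) : ZMod (n+1)) = (k : ZMod (n+1)) := Fin.cast_val_eq_self k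
  have h2 : ((((j:ℤ) - (k:ℤ) - 1 : ℤ)) : ZMod (n+1)) = 0 := by
    push_cast
    rw [hj, hk, h']
    exact (show ∀ x : ZMod (n+1), x + 1 - x - 1 = 0 by intro x; ring) k
  have h3 := (ZMod.intCast_zmod_eq_zero_iff_dvd _ _).1 h2
  exact_mod_cast h3

/-- The diagonal matrix `T = diag(ζ^(2j+1-l))` with `ζ = exp(πi/(n+1))` preserves the
bilinear form `J_l`, intertwines the cyclic shift `C` with `ω • C`, has unimodular
diagonal entries, and preserves any real diagonal Hermitian form. -/
theorem toda_automorphism_properties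
    (n : ℕ) (hn : 1 ≤ n) (l : ℤ) (ζ ω : ℂ)
    (hζ : ζ = Complex.exp (Real.pi * Complex.I / (n + 1)))
    (hω : ω = Complex.exp (2 * Real.pi * Complex.I / (n + 1)))
    (T Jl C : Matrix (Fin (n + 1)) (Fin (n + 1)) ℂ)
    (hT : T = Matrix.diagonal (fun j : Fin (n + 1) => ζ ^ (2 * (j : ℤ) + 1 - l)))
    (hJ : Jl = Matrix.of fun i j : Fin (n + 1) =>
        if i + j = ((l - 1 : ℤ) : Fin (n + 1)) then 1 else 0)
    (hC : C = Matrix.of fun j k : Fin (n + 1) => if j = k + 1 then 1 else 0) :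
    Tᵀ * Jl * T = Jl ∧
    T * C = ω • (C * T) ∧
    (∀ j : Fin (n + 1), ‖T j j‖ = 1) ∧
    (∀ g : Fin (n + 1) → ℝ,
      Tᴴ * Matrix.diagonal (fun j => (g j : ℂ)) * T
        = Matrix.diagonal (fun j => (g j : ℂ))) := by
  have hn0 : ((n:ℂ) + 1) ≠ 0 := by
    have : ((n+1 : ℕ) : ℂ) ≠ 0 := Nat.cast_ne_zero.2 (Nat.succ_ne_zero n)
    push_cast at this; exact this
  have hζ0 : ζ ≠ 0 := by rw [hζ]; exact Complex.exp_ne_zero _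
  have hζsq : ζ ^ (2:ℕ) = ω := by
    rw [hζ, hω, ← Complex.exp_nat_mul]
    congr 1
    field_simp
    ring
  have hω2 : ζ ^ ((2:ℤ)) = ω := by rw [← hζsq]; norm_cast
  have hζN : ζ ^ ((2*(n+1) : ℕ)) = 1 := by
    rw [hζ, ← Complex.exp_nat_mul]
    have : ((2*(n+1):ℕ):ℂ) * (Real.pi * Complex.I / (n + 1)) = 2 * Real.pi * Complex.I := by
      push_cast
      field_simp
    rw [this, Complex.exp_two_pi_mul_I]
  have hζZ : ζ ^ ((2*((n:ℤ)+1) : ℤ)) = 1 := by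
    have : ((2*(n+1):ℕ):ℤ) = 2*((n:ℤ)+1) := by push_cast; ring
    rw [← this, zpow_natCast, hζN]
  have key : ∀ a b : ℤ, (2*((n:ℤ)+1)) ∣ (a - b) → ζ ^ a = ζ ^ b := by
    rintro a b ⟨k, hk⟩
    have ha : a = b + 2*((n:ℤ)+1)*k := by linarith
    rw [ha, zpow_add₀ hζ0, _root_.zpow_mul, hζZ, _root_.one_zpow, mul_one]
  have habs : ‖ζ‖ = 1 := by
    have hrw : (Real.pi * Complex.I / ((n:ℂ) + 1)) = ((Real.pi/(n+1) : ℝ) : ℂ) * Complex.I := by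
      push_cast
      field_simp
    rw [hζ, hrw, Complex.norm_exp_ofReal_mul_I]
  have hunit : ∀ m : ℤ, (starRingEnd ℂ) (ζ ^ m) * ζ ^ m = 1 := by
    intro m
    have h1 : ‖ζ ^ m‖ = 1 := by rw [norm_zpow, habs, _root_.one_zpow]
    rw [mul_comm, Complex.mul_conj, Complex.normSq_eq_norm_sq, h1]
    norm_num
  refine ⟨?_, ?_, ?_, ?_⟩
  · -- TᵀJT = J
    subst hT hJ
    rw [Matrix.diagonal_transpose]
    ext i j
    by_cases h : i + j = ((l - 1 : ℤ) : Fin (n + 1))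
    · simp only [Matrix.mul_diagonal, Matrix.diagonal_mul, Matrix.of_apply, if_pos h, mul_one]
      rw [← zpow_add₀ hζ0]
      obtain ⟨k, hk⟩ := fin_add_dvd h
      have := key (2 * (i:ℤ) + 1 - l + (2 * (j:ℤ) + 1 - l)) 0 ⟨k, by linarith⟩
      rw [this, zpow_zero]
    · simp only [Matrix.mul_diagonal, Matrix.diagonal_mul, Matrix.of_apply, if_neg h,
        mul_zero, zero_mul]
  · -- TC = ω • CT
    subst hT hC
    ext j k
    by_cases h : j = k + 1
    · simp only [Matrix.diagonal_mul, Matrix.mul_diagonal, Matrix.of_apply, if_pos h,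
        Matrix.smul_apply, smul_eq_mul, mul_one, one_mul]
      obtain ⟨m, hm⟩ := fin_succ_dvd h
      have hkey := key (2 * (j:ℤ) + 1 - l) (2 + (2 * (k:ℤ) + 1 - l)) ⟨m, by linarith⟩
      rw [hkey, zpow_add₀ hζ0, hω2]
    · simp [Matrix.diagonal_mul, Matrix.mul_diagonal, h]
  · -- unimodular
    intro j
    rw [hT, Matrix.diagonal_apply_eq, norm_zpow, habs, _root_.one_zpow]
  · -- real diagonal form
    intro g
    subst hT
    rw [Matrix.diagonal_conjTranspose, Matrix.diagonal_mul_diagonal,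
      Matrix.diagonal_mul_diagonal]
    refine congrArg Matrix.diagonal (funext fun j => ?_)
    simp only [Pi.star_apply, Complex.star_def]
    show (starRingEnd ℂ) (ζ ^ (2 * (j:ℤ) + 1 - l)) * (g j : ℂ) * ζ ^ (2 * (j:ℤ) + 1 - l) = _
    calc (starRingEnd ℂ) (ζ ^ (2 * (j:ℤ) + 1 - l)) * (g j : ℂ) * ζ ^ (2 * (j:ℤ) + 1 - l)
        = ((starRingEnd ℂ) (ζ ^ (2 * (j:ℤ) + 1 - l)) * ζ ^ (2 * (j:ℤ) + 1 - l)) * (g j : ℂ) := by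
          ring
      _ = (g j : ℂ) := by rw [hunit, one_mul]
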